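/- Let (X_t) be a Markov process with semigroup (P_t) having Wasserstein curvature σ > 0 and stationary distribution π with finite first moment. For φ L-Lipschitz, x ∈ X, t > 0, n ≥ 1 and t_k = kt/n, one has | (1/n) Σ_{k=1}^n E_x[φ(X_{t_k})] - π(φ) | ≤ ((1 - e^{-σt}) L /(σ t)) ∫ d(x,y) π(dy). -/

import Mathlib

open MeasureTheory Real

private lemma geom_id (r : ℝ) (n : ℕ) :
    (1 - r) * ∑ k ∈ Finset.Icc 1 n, r ^ k = r * (1 - r ^ n) := by
  induction n with
  | zero => simp
  | succ m ih =>
    rw [Finset.sum_Icc_succ_top (by omega), mul_add, ih]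
    ring

private lemma geom_bound (v : ℝ) (hv : 0 < v) (n : ℕ) :
    (∑ k ∈ Finset.Icc 1 n, Real.exp (-v) ^ k) * ((n : ℝ) * v) ≤
      (n : ℝ) * (1 - Real.exp (-v) ^ n) := by
  set r := Real.exp (-v) with hr
  have hr0 : 0 < r := Real.exp_pos _
  have hr1 : r < 1 := Real.exp_lt_one_iff.mpr (by linarith)
  have h0 : r * Real.exp v = 1 := by rw [hr, ← Real.exp_add]; simp
  have h1 : v * r ≤ 1 - r := by
    have := Real.add_one_le_exp v
    nlinarith
  have hrn : r ^ n ≤ 1 := pow_le_one₀ hr0.le hr1.le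
  have hid := geom_id r n
  have key : (∑ k ∈ Finset.Icc 1 n, r ^ k) * ((n : ℝ) * v) * (1 - r) ≤
      (n : ℝ) * (1 - r ^ n) * (1 - r) := by
    have hn0 : (0:ℝ) ≤ (n : ℝ) := Nat.cast_nonneg n
    have e : (∑ k ∈ Finset.Icc 1 n, r ^ k) * ((n:ℝ) * v) * (1 - r)
        = ((n:ℝ) * (1 - r ^ n)) * (v * r) := by linear_combination ((n:ℝ) * v) * hid
    rw [e, show (n:ℝ) * (1 - r ^ n) * (1 - r) = ((n:ℝ) * (1 - r ^ n)) * (1 - r) from rfl]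
    exact mul_le_mul_of_nonneg_left h1 (mul_nonneg hn0 (sub_nonneg.mpr hrn))
  exact le_of_mul_le_mul_right key (by linarith)

theorem stmt14 {X : Type*} [MetricSpace X] [MeasurableSpace X] [BorelSpace X]
    (P : ℝ → X → Measure X)
    (hprob : ∀ s x, IsProbabilityMeasure (P s x))
    (σ : ℝ) (hσ : 0 < σ)
    (hcontr : ∀ s : ℝ, 0 < s → ∀ (L : ℝ), 0 ≤ L → ∀ f : X → ℝ,
      (∀ a b : X, |f a - f b| ≤ L * dist a b) →
      ∀ a b : X, |(∫ y, f y ∂(P s a)) - ∫ y, f y ∂(P s b)| ≤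
        Real.exp (-σ * s) * L * dist a b)
    (pim : Measure X) (hpim : IsProbabilityMeasure pim)
    (hpimmom : ∀ z : X, Integrable (fun y => dist z y) pim)
    (L : ℝ) (hL : 0 ≤ L) (φ : X → ℝ)
    (hφ : ∀ a b : X, |φ a - φ b| ≤ L * dist a b)
    (hφint : Integrable φ pim)
    (hφint' : ∀ s : ℝ, 0 < s → ∀ a : X, Integrable φ (P s a))
    (hinv : ∀ s : ℝ, 0 < s →
      ∫ a, (∫ y, φ y ∂(P s a)) ∂pim = ∫ y, φ y ∂pim) :
    ∀ (x : X) (t : ℝ), 0 < t → ∀ n : ℕ, 1 ≤ n →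
      |(1 / n : ℝ) * ∑ k ∈ Finset.Icc 1 n, (∫ y, φ y ∂(P (k * t / n) x)) -
          ∫ y, φ y ∂pim| ≤
        ((1 - Real.exp (-σ * t)) * L / (σ * t)) * ∫ y, dist x y ∂pim := by
  intro x t ht n hn
  have hn0 : (0:ℝ) < (n : ℝ) := by exact_mod_cast hn
  set D : ℝ := ∫ y, dist x y ∂pim with hD
  have hD0 : 0 ≤ D := integral_nonneg fun y => dist_nonneg
  set b : ℝ := ∫ y, φ y ∂pim with hb
  -- key ergodic estimate
  have key : ∀ s : ℝ, 0 < s →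
      |(∫ y, φ y ∂(P s x)) - b| ≤ Real.exp (-σ * s) * L * D := by
    intro s hs
    set g : X → ℝ := fun a => ∫ y, φ y ∂(P s a) with hg
    set C : ℝ := Real.exp (-σ * s) * L with hC
    have hC0 : 0 ≤ C := mul_nonneg (Real.exp_pos _).le hL
    have hlip : ∀ a c : X, |g a - g c| ≤ C * dist a c := fun a c =>
      hcontr s hs L hL φ hφ a c
    have hgcont : Continuous g := by
      have : LipschitzWith C.toNNReal g := by
        apply LipschitzWith.of_dist_le_mul
        intro a c
        rw [Real.dist_eq, Real.coe_toNNReal C hC0]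
        exact hlip a c
      exact this.continuous
    have hgint : Integrable g pim := by
      refine Integrable.mono' ((integrable_const |g x|).add ((hpimmom x).const_mul C))
        hgcont.aestronglyMeasurable ?_
      filter_upwards with a
      have := hlip a x
      rw [Real.norm_eq_abs]
      have : |g a| - |g x| ≤ C * dist a x := le_trans (abs_sub_abs_le_abs_sub _ _) this
      rw [dist_comm] at this
      simp only [Pi.add_apply]
      linarith
    have hbg : b = ∫ a, g a ∂pim := (hinv s hs).symm
    have step : g x - b = ∫ a, (g x - g a) ∂pim := by
      rw [hbg, integral_sub (integrable_const _) hgint, integral_const]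
      simp
    rw [show (∫ y, φ y ∂(P s x)) = g x from rfl, step]
    calc |∫ a, (g x - g a) ∂pim| ≤ ∫ a, |g x - g a| ∂pim := by
          simpa [Real.norm_eq_abs] using
            norm_integral_le_integral_norm (μ := pim) (f := fun a => g x - g a)
      _ ≤ ∫ a, C * dist x a ∂pim := by
          refine integral_mono (((integrable_const _).sub hgint).abs)
            ((hpimmom x).const_mul C) ?_
          intro a
          exact hlip x a
      _ = C * D := by rw [MeasureTheory.integral_const_mul]
  -- rewrite the average
  have hne : (n:ℝ) ≠ 0 := ne_of_gt hn0
  have hrw : (1 / n : ℝ) * ∑ k ∈ Finset.Icc 1 n, (∫ y, φ y ∂(P (k * t / n) x)) - b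
      = (1 / n : ℝ) * ∑ k ∈ Finset.Icc 1 n, ((∫ y, φ y ∂(P (k * t / n) x)) - b) := by
    rw [Finset.sum_sub_distrib, Finset.sum_const, Nat.card_Icc]
    simp only [nsmul_eq_mul]
    push_cast
    field_simp
    congr 1
    refine Finset.sum_congr rfl fun k _ => ?_
    rw [mul_comm (k:ℝ) t]
  rw [hrw]
  set r : ℝ := Real.exp (-(σ * t / n)) with hr
  have hterm : ∀ k ∈ Finset.Icc 1 n,
      |(∫ y, φ y ∂(P (k * t / n) x)) - b| ≤ r ^ k * (L * D) := by
    intro k hk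
    have hk1 : 1 ≤ k := (Finset.mem_Icc.mp hk).1
    have hk0 : (0:ℝ) < (k:ℝ) := by exact_mod_cast hk1
    have hs : (0:ℝ) < (k : ℝ) * t / n := by positivity
    have := key _ hs
    have hexp : Real.exp (-σ * ((k:ℝ) * t / n)) = r ^ k := by
      rw [hr, ← Real.exp_nat_mul]
      ring_nf
    calc |(∫ y, φ y ∂(P (k * t / n) x)) - b|
        ≤ Real.exp (-σ * ((k:ℝ) * t / n)) * L * D := this
      _ = r ^ k * (L * D) := by rw [hexp]; ring
  have hsum : |∑ k ∈ Finset.Icc 1 n, ((∫ y, φ y ∂(P (k * t / n) x)) - b)|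
      ≤ (∑ k ∈ Finset.Icc 1 n, r ^ k) * (L * D) := by
    calc |∑ k ∈ Finset.Icc 1 n, ((∫ y, φ y ∂(P (k * t / n) x)) - b)|
        ≤ ∑ k ∈ Finset.Icc 1 n, |(∫ y, φ y ∂(P (k * t / n) x)) - b| :=
          Finset.abs_sum_le_sum_abs _ _
      _ ≤ ∑ k ∈ Finset.Icc 1 n, r ^ k * (L * D) := Finset.sum_le_sum hterm
      _ = (∑ k ∈ Finset.Icc 1 n, r ^ k) * (L * D) := by rw [Finset.sum_mul]
  have hv : (0:ℝ) < σ * t / n := by positivity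
  have hgeo := geom_bound (σ * t / n) hv n
  have hrn : r ^ n = Real.exp (-σ * t) := by
    rw [hr, ← Real.exp_nat_mul]
    congr 1
    field_simp
  rw [hrn] at hgeo
  have hnv : (n:ℝ) * (σ * t / n) = σ * t := by field_simp
  rw [hnv] at hgeo
  -- conclude
  have hS : (∑ k ∈ Finset.Icc 1 n, r ^ k) ≤ (n:ℝ) * (1 - Real.exp (-σ * t)) / (σ * t) := by
    rw [le_div_iff₀ (by positivity)]
    linarith
  calc |(1 / n : ℝ) * ∑ k ∈ Finset.Icc 1 n, ((∫ y, φ y ∂(P (k * t / n) x)) - b)|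
      = (1 / n : ℝ) * |∑ k ∈ Finset.Icc 1 n, ((∫ y, φ y ∂(P (k * t / n) x)) - b)| := by
        rw [abs_mul, abs_of_nonneg (by positivity)]
    _ ≤ (1 / n : ℝ) * ((∑ k ∈ Finset.Icc 1 n, r ^ k) * (L * D)) := by
        apply mul_le_mul_of_nonneg_left hsum (by positivity)
    _ ≤ (1 / n : ℝ) * (((n:ℝ) * (1 - Real.exp (-σ * t)) / (σ * t)) * (L * D)) := by
        apply mul_le_mul_of_nonneg_left _ (by positivity)
        exact mul_le_mul_of_nonneg_right hS (by positivity)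
    _ = ((1 - Real.exp (-σ * t)) * L / (σ * t)) * D := by
        field_simp
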